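/- arXiv:2011.03141 — 2 statements merged into one kernel-verified Lean document; each statement's English description precedes it below -/
import Mathlib

section
/- Let ψ be a unit vector in ℂ^d and let σ be a density matrix on ℂ^d. Then (1/2)‖σ − |ψ⟩⟨ψ|‖₁ ≤ √(1 − ⟨ψ|σ|ψ⟩). -/
open Matrix ComplexOrder

noncomputable def traceNorm {n : Type*} [Fintype n] [DecidableEq n]
    (A : Matrix n n ℂ) : ℝ :=
  (((Matrix.posSemidef_conjTranspose_mul_self A).isHermitian.eigenvectorUnitary : Matrix n n ℂ) *
    diagonal ((fun x : ℝ => (x : ℂ)) ∘ (Real.sqrt ∘ (Matrix.posSemidef_conjTranspose_mul_self A).isHermitian.eigenvalues)) *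
    (star ((Matrix.posSemidef_conjTranspose_mul_self A).isHermitian.eigenvectorUnitary : Matrix n n ℂ))).trace.re

noncomputable def ketbra {d : ℕ} (ψ : Fin d → ℂ) : Matrix (Fin d) (Fin d) ℂ :=
  fun i j => ψ i * (starRingEnd ℂ) (ψ j)

noncomputable def kronPow {d : ℕ} (M : Matrix (Fin d) (Fin d) ℂ) (k : ℕ) :
    Matrix (Fin k → Fin d) (Fin k → Fin d) ℂ :=
  fun i j => ∏ t : Fin k, M (i t) (j t)

noncomputable def fid {d : ℕ} (ψ : Fin d → ℂ) (σ : Matrix (Fin d) (Fin d) ℂ) : ℝ :=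
  (∑ i, ∑ j, (starRingEnd ℂ) (ψ i) * σ i j * ψ j).re

open scoped MatrixOrder in
noncomputable def Matrix.PosSemidef.sqrt {n : Type*} [Fintype n] [DecidableEq n]
    {A : Matrix n n ℂ} (_hA : A.PosSemidef) : Matrix n n ℂ := CFC.sqrt A

open scoped MatrixOrder in
lemma Matrix.PosSemidef.posSemidef_sqrt {n : Type*} [Fintype n] [DecidableEq n]
    {A : Matrix n n ℂ} (hA : A.PosSemidef) : hA.sqrt.PosSemidef :=
  Matrix.nonneg_iff_posSemidef.mp (CFC.sqrt_nonneg A)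

open scoped MatrixOrder in
lemma Matrix.PosSemidef.sqrt_mul_self {n : Type*} [Fintype n] [DecidableEq n]
    {A : Matrix n n ℂ} (hA : A.PosSemidef) : hA.sqrt * hA.sqrt = A :=
  CFC.sqrt_mul_sqrt_self A (Matrix.nonneg_iff_posSemidef.mpr hA)

open scoped MatrixOrder in
lemma psd_sq_unique {n : Type*} [Fintype n] [DecidableEq n] {S T B : Matrix n n ℂ}
    (hS : S.PosSemidef) (hT : T.PosSemidef) (hSB : S * S = B) (hTB : T * T = B) : S = T := by
  rw [← CFC.sqrt_unique hSB (Matrix.nonneg_iff_posSemidef.mpr hS),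
    CFC.sqrt_unique hTB (Matrix.nonneg_iff_posSemidef.mpr hT)]

lemma herm_sqrt_spec {n : Type*} [Fintype n] [DecidableEq n] {B : Matrix n n ℂ}
    (hB : B.PosSemidef) (U : Matrix n n ℂ)
    (hU : U = (hB.isHermitian.eigenvectorUnitary : Matrix n n ℂ)) (E : Matrix n n ℂ)
    (hE : E = diagonal ((fun x : ℝ => (x : ℂ)) ∘ (Real.sqrt ∘ hB.isHermitian.eigenvalues))) :
    (U * E * star U).PosSemidef ∧ (U * E * star U) * (U * E * star U) = B := by
  have hUU : star U * U = 1 := by rw [hU]; exact Matrix.UnitaryGroup.star_mul_self _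
  have hEpsd : E.PosSemidef := by
    rw [hE]
    exact PosSemidef.diagonal (fun i => by
      simpa using Complex.ofReal_nonneg.mpr (Real.sqrt_nonneg (hB.isHermitian.eigenvalues i)))
  refine ⟨hEpsd.mul_mul_conjTranspose_same U, ?_⟩
  have hEE : E * E = diagonal (RCLike.ofReal ∘ hB.isHermitian.eigenvalues) := by
    rw [hE, diagonal_mul_diagonal]
    congr 1
    funext i
    simp only [Function.comp_apply]
    rw [← Complex.ofReal_mul, Real.mul_self_sqrt (hB.eigenvalues_nonneg i)]
    rfl
  have h1 : U * E * star U * (U * E * star U) = U * (E * E) * star U := by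
    simp only [Matrix.mul_assoc]
    rw [← Matrix.mul_assoc (star U) U, hUU, Matrix.one_mul]
  rw [h1, hEE, hU]
  exact hB.isHermitian.spectral_theorem.symm

section Aux

lemma traceNorm_hermitian {n : Type*} [Fintype n] [DecidableEq n] {A : Matrix n n ℂ}
    (hA : A.IsHermitian) : traceNorm A = ∑ i, |hA.eigenvalues i| := by
  set U : Matrix n n ℂ := (hA.eigenvectorUnitary : Matrix n n ℂ) with hU
  have hUU : (star U) * U = 1 := Matrix.UnitaryGroup.star_mul_self hA.eigenvectorUnitary
  have hmid : ∀ Z : Matrix n n ℂ, star U * (U * Z) = Z := fun Z => by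
    rw [← Matrix.mul_assoc, hUU, Matrix.one_mul]
  set D : Matrix n n ℂ := diagonal (fun i => ((|hA.eigenvalues i| : ℝ) : ℂ)) with hD
  set D0 : Matrix n n ℂ := diagonal (RCLike.ofReal ∘ hA.eigenvalues) with hD0
  have hDpsd : D.PosSemidef := PosSemidef.diagonal (fun i => by
    simpa using Complex.ofReal_nonneg.mpr (abs_nonneg _))
  set S : Matrix n n ℂ := U * D * star U with hS
  have hSpsd : S.PosSemidef := by
    exact hDpsd.mul_mul_conjTranspose_same U
  have hprod : ∀ (X Y : Matrix n n ℂ), (U * X * star U) * (U * Y * star U)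
      = U * (X * Y) * star U := by
    intro X Y
    simp only [Matrix.mul_assoc]
    rw [hmid]
  have hsq : S ^ 2 = Aᴴ * A := by
    have hAA : A = U * D0 * star U := hA.spectral_theorem
    have hDD : D * D = D0 * D0 := by
      simp only [hD, hD0, diagonal_mul_diagonal]
      apply congrArg Matrix.diagonal
      funext i
      show ((|hA.eigenvalues i| : ℝ) : ℂ) * ((|hA.eigenvalues i| : ℝ) : ℂ)
          = ((hA.eigenvalues i : ℝ) : ℂ) * ((hA.eigenvalues i : ℝ) : ℂ)
      rw [← Complex.ofReal_mul, ← Complex.ofReal_mul, abs_mul_abs_self]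
    rw [pow_two, hS, hprod, hDD, ← hprod, ← hAA, hA.eq]
  have hSeq : S = ((Matrix.posSemidef_conjTranspose_mul_self A).isHermitian.eigenvectorUnitary : Matrix n n ℂ) *
      diagonal ((fun x : ℝ => (x : ℂ)) ∘ (Real.sqrt ∘ (Matrix.posSemidef_conjTranspose_mul_self A).isHermitian.eigenvalues)) *
      (star ((Matrix.posSemidef_conjTranspose_mul_self A).isHermitian.eigenvectorUnitary : Matrix n n ℂ)) := by
    obtain ⟨hT, hTT⟩ := herm_sqrt_spec (Matrix.posSemidef_conjTranspose_mul_self A) _ rfl _ rfl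
    exact psd_sq_unique hSpsd hT (by rw [← pow_two]; exact hsq) hTT
  have htr : S.trace = ∑ i, ((|hA.eigenvalues i| : ℝ) : ℂ) := by
    rw [hS, trace_mul_cycle, hUU, Matrix.one_mul, hD, trace_diagonal]
  rw [show traceNorm A = S.trace.re by rw [hSeq]; rfl, htr]
  simp [Complex.ofReal_re]

lemma sum_eigenvalues_eq_trace {n : Type*} [Fintype n] [DecidableEq n] {A : Matrix n n ℂ}
    (hA : A.IsHermitian) : ∑ i, ((hA.eigenvalues i : ℝ) : ℂ) = A.trace := by
  set U : Matrix n n ℂ := (hA.eigenvectorUnitary : Matrix n n ℂ) with hU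
  have hUU : (star U) * U = 1 := Matrix.UnitaryGroup.star_mul_self hA.eigenvectorUnitary
  conv_rhs => rw [hA.spectral_theorem]
  rw [Unitary.conjStarAlgAut_apply, trace_mul_cycle, Unitary.coe_star_mul_self, Matrix.one_mul,
    trace_diagonal]
  rfl

variable {d : ℕ}

noncomputable def toE (x : Fin d → ℂ) : EuclideanSpace ℂ (Fin d) :=
  (WithLp.equiv 2 (Fin d → ℂ)).symm x

lemma inner_toE (x y : Fin d → ℂ) : (inner ℂ (toE x) (toE y) : ℂ) = star x ⬝ᵥ y := by
  rw [EuclideanSpace.inner_eq_star_dotProduct, dotProduct_comm]; rfl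

lemma norm_toE_sq (x : Fin d → ℂ) : ((‖toE x‖ : ℝ) ^ 2 : ℝ) = (star x ⬝ᵥ x).re := by
  have h := inner_toE x x
  have h2 : (inner ℂ (toE x) (toE x) : ℂ) = (‖toE x‖ : ℝ) ^ 2 := inner_self_eq_norm_sq_to_K _
  rw [h] at h2
  exact_mod_cast congrArg Complex.re h2.symm

lemma herm_dot_real {A : Matrix (Fin d) (Fin d) ℂ} (hA : A.IsHermitian) (x : Fin d → ℂ) :
    star x ⬝ᵥ (A *ᵥ x) = (((star x ⬝ᵥ (A *ᵥ x)).re : ℝ) : ℂ) := by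
  have h : (starRingEnd ℂ) (star x ⬝ᵥ (A *ᵥ x)) = star x ⬝ᵥ (A *ᵥ x) := by
    conv_lhs => rw [star_dotProduct]
    simp only [starRingEnd_apply, star_star]
    rw [star_mulVec, ← dotProduct_mulVec, hA.eq]
  exact (Complex.conj_eq_iff_re.mp h).symm

lemma psd_dot_re_nonneg {A : Matrix (Fin d) (Fin d) ℂ} (hA : A.PosSemidef) (x : Fin d → ℂ) :
    0 ≤ (star x ⬝ᵥ (A *ᵥ x)).re := by
  simpa using hA.re_dotProduct_nonneg x

lemma sqrt_dot {A : Matrix (Fin d) (Fin d) ℂ} (hA : A.PosSemidef) (x y : Fin d → ℂ) :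
    star x ⬝ᵥ (A *ᵥ y) = star (hA.sqrt *ᵥ x) ⬝ᵥ (hA.sqrt *ᵥ y) := by
  symm
  rw [star_mulVec, dotProduct_mulVec, vecMul_vecMul, ← dotProduct_mulVec,
    hA.posSemidef_sqrt.1.eq, hA.sqrt_mul_self]

lemma norm_toE_eq (x : Fin d → ℂ) : ‖toE x‖ = Real.sqrt ((star x ⬝ᵥ x).re) := by
  rw [← norm_toE_sq, Real.sqrt_sq (norm_nonneg _)]

/-- Cauchy-Schwarz for a PSD quadratic form. -/
lemma psd_cs {A : Matrix (Fin d) (Fin d) ℂ} (hA : A.PosSemidef) (x y : Fin d → ℂ) :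
    ‖star x ⬝ᵥ (A *ᵥ y)‖
      ≤ Real.sqrt ((star x ⬝ᵥ (A *ᵥ x)).re) * Real.sqrt ((star y ⬝ᵥ (A *ᵥ y)).re) := by
  rw [sqrt_dot hA x y, sqrt_dot hA x x, sqrt_dot hA y y, ← inner_toE, ← norm_toE_eq, ← norm_toE_eq]
  simpa using norm_inner_le_norm (𝕜 := ℂ) (toE (hA.sqrt *ᵥ x)) (toE (hA.sqrt *ᵥ y))

lemma ketbra_mulVec (u x : Fin d → ℂ) : ketbra u *ᵥ x = (star u ⬝ᵥ x) • u := by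
  funext i
  simp only [mulVec, dotProduct, ketbra, Pi.smul_apply, smul_eq_mul, Pi.star_apply,
    ← starRingEnd_apply]
  rw [Finset.sum_mul]
  refine Finset.sum_congr rfl fun j _ => ?_
  ring

lemma dot_ketbra (u x : Fin d → ℂ) :
    star x ⬝ᵥ (ketbra u *ᵥ x) = ((‖star u ⬝ᵥ x‖ ^ 2 : ℝ) : ℂ) := by
  rw [ketbra_mulVec, dotProduct_smul]
  have h : star x ⬝ᵥ u = (starRingEnd ℂ) (star u ⬝ᵥ x) := by
    simp only [dotProduct, map_sum, starRingEnd_apply, Pi.star_apply]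
    refine Finset.sum_congr rfl fun j _ => ?_
    rw [StarMul.star_mul, star_star]
  rw [h, smul_eq_mul, Complex.sq_norm, Complex.normSq_eq_conj_mul_self, mul_comm]

lemma trace_mul_ketbra (A : Matrix (Fin d) (Fin d) ℂ) (u : Fin d → ℂ) :
    (A * ketbra u).trace = star u ⬝ᵥ (A *ᵥ u) := by
  simp only [trace, diag, Matrix.mul_apply, ketbra, dotProduct, mulVec, Pi.star_apply,
    ← starRingEnd_apply]
  refine Finset.sum_congr rfl fun i _ => ?_
  rw [Finset.mul_sum]
  refine Finset.sum_congr rfl fun j _ => ?_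
  ring

lemma psd_trace_re_nonneg {A : Matrix (Fin d) (Fin d) ℂ} (hA : A.PosSemidef) :
    0 ≤ A.trace.re := by
  have h : ∀ i, star (Pi.single i 1) ⬝ᵥ (A *ᵥ Pi.single i (1:ℂ)) = A i i := by
    intro i
    rw [mulVec_single]
    simp [dotProduct, Pi.single_apply, apply_ite (star : ℂ → ℂ)]
  rw [trace, Complex.re_sum]
  refine Finset.sum_nonneg fun i _ => ?_
  rw [diag_apply, ← h i]
  simpa using hA.re_dotProduct_nonneg (Pi.single i 1)

lemma ketbra_hermitian (u : Fin d → ℂ) : (ketbra u).IsHermitian := by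
  funext i j
  rw [conjTranspose_apply]
  show star (u j * (starRingEnd ℂ) (u i)) = u i * (starRingEnd ℂ) (u j)
  simp only [starRingEnd_apply, star_mul', star_star]
  ring

lemma norm_toE_one {u : Fin d → ℂ} (h : star u ⬝ᵥ u = 1) : ‖toE u‖ = 1 := by
  rw [norm_toE_eq, h]
  simp

lemma bessel_pair {σ : Matrix (Fin d) (Fin d) ℂ} (hσ : σ.PosSemidef)
    {u₁ u₂ : Fin d → ℂ} (h11 : star u₁ ⬝ᵥ u₁ = 1) (h22 : star u₂ ⬝ᵥ u₂ = 1)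
    (h12 : star u₁ ⬝ᵥ u₂ = 0) :
    (star u₁ ⬝ᵥ (σ *ᵥ u₁)).re + (star u₂ ⬝ᵥ (σ *ᵥ u₂)).re ≤ σ.trace.re := by
  have h21 : star u₂ ⬝ᵥ u₁ = 0 := by rw [star_dotProduct, h12, star_zero]
  have horth : Orthonormal ℂ ![toE u₁, toE u₂] := by
    rw [orthonormal_iff_ite]
    intro i j
    fin_cases i <;> fin_cases j <;>
      · simp only [Matrix.cons_val_zero, Matrix.cons_val_one, Matrix.head_cons, inner_toE]
        norm_num
        first | exact h11 | exact h22 | exact h12 | exact h21 | exact Or.inl (norm_toE_one h11) | exact Or.inl (norm_toE_one h22) | (rw [inner_toE]; exact h12) | (rw [inner_toE]; exact h21)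
  set Q : Matrix (Fin d) (Fin d) ℂ := 1 - ketbra u₁ - ketbra u₂ with hQ
  have hQherm : Q.IsHermitian :=
    ((isHermitian_one).sub (ketbra_hermitian u₁)).sub (ketbra_hermitian u₂)
  have hQpsd : Q.PosSemidef := by
    refine Matrix.PosSemidef.of_dotProduct_mulVec_nonneg hQherm fun x => ?_
    have hxx : star x ⬝ᵥ x = (((‖toE x‖ : ℝ) ^ 2 : ℝ) : ℂ) := by
      rw [← inner_toE]
      exact_mod_cast inner_self_eq_norm_sq_to_K (𝕜 := ℂ) (toE x)
    have hbessel := horth.sum_inner_products_le (s := Finset.univ) (toE x)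
    rw [Fin.sum_univ_two] at hbessel
    simp only [Matrix.cons_val_zero, Matrix.cons_val_one, Matrix.head_cons, inner_toE] at hbessel
    have hb : ‖star u₁ ⬝ᵥ x‖ ^ 2 + ‖star u₂ ⬝ᵥ x‖ ^ 2
        ≤ (‖toE x‖ : ℝ) ^ 2 := by
      simpa using hbessel
    rw [hQ, sub_mulVec, sub_mulVec, one_mulVec, dotProduct_sub, dotProduct_sub,
      dot_ketbra, dot_ketbra, hxx]
    have heq : ((((‖toE x‖ : ℝ) ^ 2 : ℝ)) : ℂ) - ((‖star u₁ ⬝ᵥ x‖ ^ 2 : ℝ) : ℂ)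
        - ((‖star u₂ ⬝ᵥ x‖ ^ 2 : ℝ) : ℂ)
        = (((‖toE x‖ : ℝ) ^ 2 - ‖star u₁ ⬝ᵥ x‖ ^ 2
            - ‖star u₂ ⬝ᵥ x‖ ^ 2 : ℝ) : ℂ) := by push_cast; ring
    rw [heq, Complex.zero_le_real]
    linarith
  set R := hσ.sqrt with hR
  have hRQR : (R * Q * R).PosSemidef := by
    have := hQpsd.mul_mul_conjTranspose_same R
    rwa [hσ.posSemidef_sqrt.1.eq] at this
  have htr : (σ * Q).trace = (R * Q * R).trace := by
    rw [show σ = R * R from hσ.sqrt_mul_self.symm, Matrix.mul_assoc, trace_mul_comm]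
  have h2 : 0 ≤ ((σ * Q).trace).re := htr ▸ psd_trace_re_nonneg hRQR
  have h1 : (σ * Q).trace = σ.trace - (σ * ketbra u₁).trace - (σ * ketbra u₂).trace := by
    rw [hQ, Matrix.mul_sub, Matrix.mul_sub, Matrix.mul_one, trace_sub, trace_sub]
  rw [h1, Complex.sub_re, Complex.sub_re, trace_mul_ketbra, trace_mul_ketbra] at h2
  linarith

lemma bessel_single {σ : Matrix (Fin d) (Fin d) ℂ} (hσ : σ.PosSemidef)
    {u₁ : Fin d → ℂ} (h11 : star u₁ ⬝ᵥ u₁ = 1) :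
    (star u₁ ⬝ᵥ (σ *ᵥ u₁)).re ≤ σ.trace.re := by
  set Q : Matrix (Fin d) (Fin d) ℂ := 1 - ketbra u₁ with hQ
  have hQpsd : Q.PosSemidef := by
    refine Matrix.PosSemidef.of_dotProduct_mulVec_nonneg ((isHermitian_one).sub (ketbra_hermitian u₁)) fun x => ?_
    have hxx : star x ⬝ᵥ x = (((‖toE x‖ : ℝ) ^ 2 : ℝ) : ℂ) := by
      rw [← inner_toE]
      exact_mod_cast inner_self_eq_norm_sq_to_K (𝕜 := ℂ) (toE x)
    have hcs := norm_inner_le_norm (𝕜 := ℂ) (toE u₁) (toE x)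
    rw [inner_toE, norm_toE_one h11, one_mul] at hcs
    have hb : ‖star u₁ ⬝ᵥ x‖ ^ 2 ≤ (‖toE x‖ : ℝ) ^ 2 := by
      exact pow_le_pow_left₀ (norm_nonneg _) hcs 2
    rw [hQ, sub_mulVec, one_mulVec, dotProduct_sub, dot_ketbra, hxx]
    have heq : ((((‖toE x‖ : ℝ) ^ 2 : ℝ)) : ℂ) - ((‖star u₁ ⬝ᵥ x‖ ^ 2 : ℝ) : ℂ)
        = (((‖toE x‖ : ℝ) ^ 2 - ‖star u₁ ⬝ᵥ x‖ ^ 2 : ℝ) : ℂ) := by push_cast; ring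
    rw [heq, Complex.zero_le_real]
    linarith
  set R := hσ.sqrt with hR
  have hRQR : (R * Q * R).PosSemidef := by
    have := hQpsd.mul_mul_conjTranspose_same R
    rwa [hσ.posSemidef_sqrt.1.eq] at this
  have htr : (σ * Q).trace = (R * Q * R).trace := by
    rw [show σ = R * R from hσ.sqrt_mul_self.symm, Matrix.mul_assoc, trace_mul_comm]
  have h2 : 0 ≤ ((σ * Q).trace).re := htr ▸ psd_trace_re_nonneg hRQR
  have h1 : (σ * Q).trace = σ.trace - (σ * ketbra u₁).trace := by
    rw [hQ, Matrix.mul_sub, Matrix.mul_one, trace_sub]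
  rw [h1, Complex.sub_re, trace_mul_ketbra] at h2
  linarith

theorem scalar_key (a b f G q : ℝ) (ha : 0 ≤ a) (hb : 0 ≤ b) (hf : 0 ≤ f) (hG : 0 ≤ G)
    (hab : a^2 + b^2 = 1) (hfG : f^2 + G^2 = 1) (hq : 0 ≤ q) (hqb : q ≤ b*G) :
    a^2 - (a*f - q)^2 ≤ G := by
  rcases le_or_gt (a*f) (b*G) with h | h
  · have hh := mul_le_mul h h (mul_nonneg ha hf) (mul_nonneg hb hG)
    have h1 : a^2 ≤ G^2 := by nlinarith [hh]
    have hG1 : G ≤ 1 := by nlinarith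
    nlinarith [sq_nonneg (a*f - q), mul_nonneg hG (by linarith : (0:ℝ) ≤ 1 - G)]
  · have e1 : (G*(b^2-a^2) - 2*a*b*f)^2 + (G*2*a*b + f*(b^2-a^2))^2
        = (f^2+G^2)*((a^2+b^2))^2 := by ring
    have e2 : (f^2+G^2)*((a^2+b^2))^2 = 1 := by rw [hab, hfG]; ring
    have h2 : (G*(b^2-a^2) - 2*a*b*f)^2 ≤ 1^2 := by
      nlinarith [sq_nonneg (G*2*a*b + f*(b^2-a^2))]
    have h3 : -1 ≤ G*(b^2-a^2) - 2*a*b*f := (abs_le_of_sq_le_sq' h2 one_pos.le).1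
    have h4 : 0 ≤ 1 + G*(b^2-a^2) - 2*a*b*f := by linarith
    have eq : G - a^2 + (a*f-b*G)^2
        = G*(1 + G*(b^2-a^2) - 2*a*b*f) + a^2*(f^2+G^2-1) := by ring
    have key : a^2 - (a*f - b*G)^2 ≤ G := by
      have h5 := mul_nonneg hG h4
      rw [hfG] at eq
      linarith [eq, h5]
    have h5 : (a*f - b*G)^2 ≤ (a*f - q)^2 := by nlinarith
    linarith

lemma herm_cross {A : Matrix (Fin d) (Fin d) ℂ} (hA : A.IsHermitian) (x y : Fin d → ℂ) :
    star x ⬝ᵥ (A *ᵥ y) = star (star y ⬝ᵥ (A *ᵥ x)) := by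
  conv_rhs => rw [star_dotProduct, star_star]
  rw [star_mulVec, ← dotProduct_mulVec, hA.eq]

/-- Step D: the quadratic form of σ minus fidelity term is bounded below. -/
lemma unit_lower_bound {σ : Matrix (Fin d) (Fin d) ℂ} (hσ : σ.PosSemidef)
    (hσtr : σ.trace = 1) {ψ : Fin d → ℂ} (hψ : star ψ ⬝ᵥ ψ = 1)
    {v : Fin d → ℂ} (hv : star v ⬝ᵥ v = 1) :
    -(Real.sqrt (1 - (star ψ ⬝ᵥ (σ *ᵥ ψ)).re))
      ≤ (star v ⬝ᵥ (σ *ᵥ v)).re - ‖star ψ ⬝ᵥ v‖ ^ 2 := by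
  set F : ℝ := (star ψ ⬝ᵥ (σ *ᵥ ψ)).re with hF
  have htr_re : σ.trace.re = 1 := by rw [hσtr]; simp
  have hF0 : 0 ≤ F := psd_dot_re_nonneg hσ ψ
  have hF1 : F ≤ 1 := by
    have := bessel_single hσ hψ
    rwa [htr_re] at this
  set c : ℂ := star ψ ⬝ᵥ v with hc
  set a : ℝ := ‖c‖ with ha
  have ha0 : 0 ≤ a := norm_nonneg c
  have ha1 : a ≤ 1 := by
    have hcs := norm_inner_le_norm (𝕜 := ℂ) (toE ψ) (toE v)
    rwa [inner_toE, norm_toE_one hψ, norm_toE_one hv, one_mul, ← hc] at hcs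
  have ha2 : a ^ 2 ≤ 1 := by nlinarith
  set w : Fin d → ℂ := v - c • ψ with hw
  have hvw : star ψ ⬝ᵥ w = 0 := by
    rw [hw, dotProduct_sub, dotProduct_smul, hψ, smul_eq_mul, mul_one, ← hc, sub_self]
  have hpsiv : star v ⬝ᵥ ψ = star c := by
    rw [star_dotProduct]
  have hww : star w ⬝ᵥ w = (((1 - a^2 : ℝ)) : ℂ) := by
    have hsw : star w = star v - star c • star ψ := by
      rw [hw, star_sub, star_smul]
    rw [hw, hsw, sub_dotProduct, dotProduct_sub, dotProduct_sub, smul_dotProduct,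
      smul_dotProduct, hv, dotProduct_smul, dotProduct_smul, hψ, hpsiv, ← hc]
    simp only [smul_eq_mul, mul_one]
    have : c * star c = ((a ^ 2 : ℝ) : ℂ) := by
      rw [ha, ← starRingEnd_apply, Complex.mul_conj, ← Complex.sq_norm]
    rw [this]
    push_cast
    ring
  set s : ℝ := (star w ⬝ᵥ (σ *ᵥ w)).re with hs
  have hs0 : 0 ≤ s := psd_dot_re_nonneg hσ w
  have hs_bound : s ≤ (1 - F) * (1 - a^2) := by
    by_cases hw0 : w = 0
    · rw [hs, hw0]
      simp only [mulVec_zero, dotProduct_zero, Complex.zero_re]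
      exact mul_nonneg (by linarith) (by nlinarith)
    · have hwpos : 0 < 1 - a^2 := by
        have h1 := norm_toE_sq w
        rw [hww] at h1
        have h2 : 0 < ‖toE w‖ := by
          rw [norm_pos_iff]
          intro h0
          apply hw0
          funext i
          exact congrArg (fun z : EuclideanSpace ℂ (Fin d) => z i) h0
        nlinarith [Complex.ofReal_re (1 - a^2)]
      set nw : ℝ := Real.sqrt (1 - a^2) with hnw
      have hnwpos : 0 < nw := Real.sqrt_pos.mpr hwpos
      have hnwsq : nw ^ 2 = 1 - a^2 := Real.sq_sqrt hwpos.le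
      set u₂ : Fin d → ℂ := ((nw : ℂ))⁻¹ • w with hu2
      have hstar_u2 : star u₂ = ((nw : ℂ))⁻¹ • star w := by
        rw [hu2, star_smul, star_inv₀, Complex.star_def, Complex.conj_ofReal]
      have h22 : star u₂ ⬝ᵥ u₂ = 1 := by
        rw [hu2, hstar_u2, smul_dotProduct, dotProduct_smul, hww, smul_eq_mul, smul_eq_mul]
        rw [← Complex.ofReal_inv, ← Complex.ofReal_mul, ← Complex.ofReal_mul]
        have hone : nw⁻¹ * (nw⁻¹ * (1 - a^2)) = 1 := by
          rw [← hnwsq]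
          field_simp
        rw [hone, Complex.ofReal_one]
      have h12 : star ψ ⬝ᵥ u₂ = 0 := by
        rw [hu2, dotProduct_smul, hvw, smul_zero]
      have hbp := bessel_pair hσ hψ h22 h12
      rw [htr_re, ← hF] at hbp
      have hscale : (star u₂ ⬝ᵥ (σ *ᵥ u₂)).re = (nw⁻¹)^2 * s := by
        rw [hu2, mulVec_smul, hstar_u2, smul_dotProduct, dotProduct_smul, smul_eq_mul,
          smul_eq_mul, ← mul_assoc, ← Complex.ofReal_inv, ← Complex.ofReal_mul,
          Complex.re_ofReal_mul, hs]
        ring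
      have h6 : (nw⁻¹)^2 * s ≤ 1 - F := by linarith [hscale ▸ hbp]
      calc s = nw^2 * ((nw⁻¹)^2 * s) := by field_simp
      _ ≤ nw^2 * (1 - F) := by
          apply mul_le_mul_of_nonneg_left h6 (by positivity)
      _ = (1 - F) * (1 - a^2) := by rw [hnwsq]; ring
  -- expansion of the quadratic form
  set t : ℂ := star ψ ⬝ᵥ (σ *ᵥ w) with ht
  have hvsplit : v = c • ψ + w := by rw [hw]; abel
  have hexp : (star v ⬝ᵥ (σ *ᵥ v)).re = a^2 * F + 2 * (star c * t).re + s := by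
    have hsv : star v = star c • star ψ + star w := by
      rw [hvsplit, star_add, star_smul]
    have hcross : star w ⬝ᵥ (σ *ᵥ ψ) = star t := by rw [ht, herm_cross hσ.1 w ψ]
    have hq : star v ⬝ᵥ (σ *ᵥ v)
        = (star c * c) * (star ψ ⬝ᵥ (σ *ᵥ ψ)) + star c * t + c * star t + star w ⬝ᵥ (σ *ᵥ w) := by
      conv_lhs => rw [hsv, hvsplit]
      simp only [mulVec_add, mulVec_smul, add_dotProduct, smul_dotProduct, dotProduct_add,
        dotProduct_smul, smul_eq_mul, hcross, ← ht]
      ring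
    have hOF : star ψ ⬝ᵥ (σ *ᵥ ψ) = ((F : ℝ) : ℂ) := herm_dot_real hσ.1 ψ
    have hcc : star c * c = ((a^2 : ℝ) : ℂ) := by
      rw [mul_comm, ha, ← starRingEnd_apply, Complex.mul_conj, ← Complex.sq_norm]
    have hconj : (c * star t).re = (star c * t).re := by
      have h' : star (star c * t) = c * star t := by
        rw [star_mul', star_star, mul_comm]
      rw [← h', Complex.star_def, Complex.conj_re]
    rw [hq, hOF, hcc]
    simp only [Complex.add_re, ← Complex.ofReal_mul, Complex.ofReal_re, hconj, ← hs]
    ring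
  -- apply the scalar inequality
  set f : ℝ := Real.sqrt F with hf
  set G : ℝ := Real.sqrt (1 - F) with hG
  set q : ℝ := Real.sqrt s with hqd
  set b : ℝ := Real.sqrt (1 - a^2) with hb
  have hf2 : f^2 = F := Real.sq_sqrt hF0
  have hG2 : G^2 = 1 - F := Real.sq_sqrt (by linarith)
  have hq2 : q^2 = s := Real.sq_sqrt hs0
  have hb2 : b^2 = 1 - a^2 := Real.sq_sqrt (by nlinarith)
  have hcs2 := psd_cs hσ ψ w
  rw [← hF, ← hs, ← hf, ← hqd, ← ht] at hcs2
  have hre : -(a * (f * q)) ≤ (star c * t).re := by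
    have h1 : |(star c * t).re| ≤ ‖star c * t‖ := Complex.abs_re_le_norm _
    have h2 : ‖star c * t‖ = a * ‖t‖ := by
      rw [norm_mul, ha, ← starRingEnd_apply, Complex.norm_conj]
    have h3 : a * ‖t‖ ≤ a * (f * q) :=
      mul_le_mul_of_nonneg_left hcs2 ha0
    have h4 := neg_abs_le ((star c * t).re)
    linarith
  have hstep : (a*f - q)^2 ≤ (star v ⬝ᵥ (σ *ᵥ v)).re := by
    rw [hexp]
    nlinarith [hre, hf2, hq2]
  have hkey := scalar_key a b f G q ha0 (Real.sqrt_nonneg _) (Real.sqrt_nonneg _)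
    (Real.sqrt_nonneg _) (by rw [hb2]; ring) (by rw [hf2, hG2]; ring)
    (Real.sqrt_nonneg _) ?_
  · linarith [hstep, hkey]
  · rw [hqd, hb, hG, ← Real.sqrt_mul (by linarith : (0:ℝ) ≤ 1 - a^2)]
    exact Real.sqrt_le_sqrt (by linarith [hs_bound])

lemma fid_eq (ψ : Fin d → ℂ) (σ : Matrix (Fin d) (Fin d) ℂ) :
    fid ψ σ = (star ψ ⬝ᵥ (σ *ᵥ ψ)).re := by
  rw [fid]
  congr 1
  simp only [dotProduct, mulVec, Pi.star_apply, ← starRingEnd_apply]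
  refine Finset.sum_congr rfl fun i _ => ?_
  rw [Finset.mul_sum]
  refine Finset.sum_congr rfl fun j _ => ?_
  ring

lemma trace_ketbra (ψ : Fin d → ℂ) (hψ : ∑ i, ‖ψ i‖ ^ 2 = 1) :
    (ketbra ψ).trace = 1 := by
  rw [trace]
  have : ∀ i, (ketbra ψ).diag i = ((‖ψ i‖ ^ 2 : ℝ) : ℂ) := by
    intro i
    rw [diag_apply]
    show ψ i * (starRingEnd ℂ) (ψ i) = _
    rw [Complex.mul_conj, ← Complex.sq_norm]
  rw [Finset.sum_congr rfl fun i _ => this i, ← Complex.ofReal_sum, hψ, Complex.ofReal_one]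

lemma psi_unit (ψ : Fin d → ℂ) (hψ : ∑ i, ‖ψ i‖ ^ 2 = 1) :
    star ψ ⬝ᵥ ψ = 1 := by
  have : ∀ i, star (ψ i) * ψ i = ((‖ψ i‖ ^ 2 : ℝ) : ℂ) := by
    intro i
    rw [← starRingEnd_apply, mul_comm, Complex.mul_conj, ← Complex.sq_norm]
  rw [dotProduct]
  simp only [Pi.star_apply]
  rw [Finset.sum_congr rfl fun i _ => this i, ← Complex.ofReal_sum, hψ, Complex.ofReal_one]

end Aux

/-- Pure-target Fuchs–van de Graaf inequality. -/
theorem trace_dist_le_sqrt_one_sub_fidelity {d : ℕ} (ψ : Fin d → ℂ)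
    (hψ : ∑ i, ‖ψ i‖ ^ 2 = 1)
    (σ : Matrix (Fin d) (Fin d) ℂ) (hσ : σ.PosSemidef) (hσtr : σ.trace = 1) :
    (1 / 2 : ℝ) * traceNorm (σ - ketbra ψ) ≤ Real.sqrt (1 - fid ψ σ) := by
  have hψ1 : star ψ ⬝ᵥ ψ = 1 := psi_unit ψ hψ
  set Δ : Matrix (Fin d) (Fin d) ℂ := σ - ketbra ψ with hΔ
  have hΔherm : Δ.IsHermitian := hσ.1.sub (ketbra_hermitian ψ)
  set lam : Fin d → ℝ := hΔherm.eigenvalues with hlam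
  set vi : Fin d → (Fin d → ℂ) := fun i => ⇑(hΔherm.eigenvectorBasis i) with hvi
  have hvv : ∀ i j, star (vi i) ⬝ᵥ vi j = if i = j then 1 else 0 := by
    intro i j
    have h := orthonormal_iff_ite.mp hΔherm.eigenvectorBasis.orthonormal i j
    rw [← inner_toE]
    exact h
  have heig : ∀ i, Δ *ᵥ vi i = ((lam i : ℝ) : ℂ) • vi i := by
    intro i
    have h := hΔherm.mulVec_eigenvectorBasis i
    rw [hvi]
    convert h using 1
    funext j
    simp [hlam, Complex.real_smul]
  have hqΔ : ∀ i, star (vi i) ⬝ᵥ (Δ *ᵥ vi i) = ((lam i : ℝ) : ℂ) := by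
    intro i
    rw [heig i, dotProduct_smul, hvv i i, if_pos rfl, smul_eq_mul, mul_one]
  have hsplit : ∀ x : Fin d → ℂ, star x ⬝ᵥ (σ *ᵥ x)
      = star x ⬝ᵥ (Δ *ᵥ x) + ((‖star ψ ⬝ᵥ x‖ ^ 2 : ℝ) : ℂ) := by
    intro x
    rw [hΔ, sub_mulVec, dotProduct_sub, dot_ketbra]
    ring
  -- a negative eigenvalue's eigenvector has nonzero overlap with ψ
  have hoverlap : ∀ i, lam i < 0 → star ψ ⬝ᵥ vi i ≠ 0 := by
    intro i hneg h0
    have h1 := psd_dot_re_nonneg hσ (vi i)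
    rw [hsplit (vi i), h0] at h1
    have h2 : ‖(0 : ℂ)‖ ^ 2 = 0 := by simp
    rw [h2, Complex.ofReal_zero, add_zero, hqΔ i, Complex.ofReal_re] at h1
    linarith
  -- at most one negative eigenvalue
  have huniq : ∀ i j, lam i < 0 → lam j < 0 → i = j := by
    intro i j hi hj
    by_contra hij
    set ci : ℂ := star ψ ⬝ᵥ vi i with hci
    set cj : ℂ := star ψ ⬝ᵥ vi j with hcj
    set y : Fin d → ℂ := cj • vi i - ci • vi j with hy
    have hyorth : star ψ ⬝ᵥ y = 0 := by
      rw [hy, dotProduct_sub, dotProduct_smul, dotProduct_smul, ← hci, ← hcj,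
        smul_eq_mul, smul_eq_mul, mul_comm, sub_self]
    have hsy : star y = star cj • star (vi i) - star ci • star (vi j) := by
      rw [hy, star_sub, star_smul, star_smul]
    have hΔy : Δ *ᵥ y = (cj * ((lam i : ℝ) : ℂ)) • vi i - (ci * ((lam j : ℝ) : ℂ)) • vi j := by
      rw [hy, mulVec_sub, mulVec_smul, mulVec_smul, heig i, heig j, smul_smul, smul_smul]
    have hvii := hvv i i
    have hvjj := hvv j j
    have hvij := hvv i j
    have hvji := hvv j i
    rw [if_pos rfl] at hvii hvjj
    rw [if_neg hij] at hvij
    rw [if_neg (Ne.symm hij)] at hvji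
    have hqy : star y ⬝ᵥ (Δ *ᵥ y)
        = star cj * cj * ((lam i : ℝ) : ℂ) + star ci * ci * ((lam j : ℝ) : ℂ) := by
      rw [hΔy, hsy, sub_dotProduct, smul_dotProduct, smul_dotProduct, dotProduct_sub,
        dotProduct_sub, dotProduct_smul, dotProduct_smul, dotProduct_smul, dotProduct_smul,
        hvii, hvjj, hvij, hvji]
      simp only [smul_eq_mul, mul_zero, mul_one, sub_zero, zero_sub, mul_neg, neg_neg]
      ring
    have habs : ∀ z : ℂ, star z * z = ((‖z‖ ^ 2 : ℝ) : ℂ) := by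
      intro z
      rw [← starRingEnd_apply, mul_comm, Complex.mul_conj, ← Complex.sq_norm]
    have h1 := psd_dot_re_nonneg hσ y
    rw [hsplit y, hyorth] at h1
    have h2' : ‖(0 : ℂ)‖ ^ 2 = 0 := by simp
    rw [h2', Complex.ofReal_zero, add_zero] at h1
    have h2 : (star y ⬝ᵥ (Δ *ᵥ y)).re
        = ‖cj‖ ^ 2 * lam i + ‖ci‖ ^ 2 * lam j := by
      rw [hqy, habs cj, habs ci]
      simp only [← Complex.ofReal_mul, Complex.add_re, Complex.ofReal_re]
    have hci0 : ci ≠ 0 := hoverlap i hi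
    have hcj0 : cj ≠ 0 := hoverlap j hj
    have hciabs : 0 < ‖ci‖ ^ 2 := pow_pos (norm_pos_iff.mpr hci0) 2
    have hcjabs : 0 < ‖cj‖ ^ 2 := pow_pos (norm_pos_iff.mpr hcj0) 2
    have hneg : (star y ⬝ᵥ (Δ *ᵥ y)).re < 0 := by
      rw [h2]
      nlinarith
    linarith
  -- trace norm as sum of |eigenvalues|
  have htn : traceNorm Δ = ∑ i, |lam i| := traceNorm_hermitian hΔherm
  have hsum0 : ∑ i, lam i = 0 := by
    have h1 : ∑ i, ((lam i : ℝ) : ℂ) = Δ.trace := sum_eigenvalues_eq_trace hΔherm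
    rw [hΔ, trace_sub, hσtr, trace_ketbra ψ hψ, sub_self] at h1
    have h2 := congrArg Complex.re h1
    simp only [Complex.re_sum, Complex.ofReal_re, Complex.zero_re] at h2
    exact h2
  -- fidelity
  have hfid : fid ψ σ = (star ψ ⬝ᵥ (σ *ᵥ ψ)).re := fid_eq ψ σ
  set N : Finset (Fin d) := Finset.univ.filter (fun i => lam i < 0) with hN
  have habs_split : ∀ i, |lam i| = lam i + if lam i < 0 then -2 * lam i else 0 := by
    intro i
    by_cases h : lam i < 0
    · rw [if_pos h, abs_of_neg h]; ring
    · rw [if_neg h, abs_of_nonneg (not_lt.mp h)]; ring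
  have hsum_abs : ∑ i, |lam i| = ∑ i ∈ N, (-2 * lam i) := by
    rw [Finset.sum_congr rfl fun i _ => habs_split i, Finset.sum_add_distrib, hsum0,
      zero_add, hN, Finset.sum_filter]
  rcases Finset.eq_empty_or_nonempty N with hNe | ⟨i₀, hi₀⟩
  · rw [htn, hsum_abs, hNe, Finset.sum_empty]
    simp [Real.sqrt_nonneg]
  · have hi₀neg : lam i₀ < 0 := (Finset.mem_filter.mp hi₀).2
    have hNsing : N = {i₀} := by
      apply Finset.eq_singleton_iff_unique_mem.mpr
      refine ⟨hi₀, fun j hj => ?_⟩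
      exact huniq j i₀ (Finset.mem_filter.mp hj).2 hi₀neg
    have hval : ∑ i, |lam i| = -2 * lam i₀ := by
      rw [hsum_abs, hNsing, Finset.sum_singleton]
    -- lower bound on lam i₀
    have hunit : star (vi i₀) ⬝ᵥ vi i₀ = 1 := by rw [hvv i₀ i₀, if_pos rfl]
    have hlb := unit_lower_bound hσ hσtr hψ1 hunit
    have hqσ : (star (vi i₀) ⬝ᵥ (σ *ᵥ vi i₀)).re
        = lam i₀ + ‖star ψ ⬝ᵥ vi i₀‖ ^ 2 := by
      rw [hsplit (vi i₀), Complex.add_re, hqΔ i₀, Complex.ofReal_re, Complex.ofReal_re]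
    rw [hqσ] at hlb
    rw [htn, hval, hfid]
    linarith [hlb]
end

section
/- Let δ, ε ≥ 0, k ≥ 1 and a > 0. Let p, q : Fin m → ℝ be probability vectors and let f : Fin m → ℝ satisfy 0 ≤ f_z ≤ 1 for all z. Assume ∑_z p_z (1 − f_z) ≤ δ and |∑_z (q_z − p_z) f_z^k| ≤ ε. Then ∑_z q_z f_z^k ≥ 1 − ε − kδ/a − k√a. -/
/-- Fidelity conclusion of the paper's Theorem 3 (computational case). -/
theorem fidelity_lower_bound (δ ε : ℝ) (hδ : 0 ≤ δ) (hε : 0 ≤ ε)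
    (k : ℕ) (hk : 1 ≤ k) (a : ℝ) (ha : 0 < a)
    {m : ℕ} (p q f : Fin m → ℝ)
    (hp0 : ∀ z, 0 ≤ p z) (hp1 : ∑ z, p z = 1)
    (hq0 : ∀ z, 0 ≤ q z) (hq1 : ∑ z, q z = 1)
    (hf : ∀ z, 0 ≤ f z ∧ f z ≤ 1)
    (h1 : ∑ z, p z * (1 - f z) ≤ δ)
    (h2 : |∑ z, (q z - p z) * (f z) ^ k| ≤ ε) :
    1 - ε - (k : ℝ) * δ / a - (k : ℝ) * Real.sqrt a ≤ ∑ z, q z * (f z) ^ k := by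
  set d : ℝ := ∑ z, p z * (1 - f z) with hd
  have hd0 : 0 ≤ d := Finset.sum_nonneg fun z _ =>
    mul_nonneg (hp0 z) (by linarith [(hf z).2])
  have hd1 : d ≤ 1 := by
    rw [hd, ← hp1]
    exact Finset.sum_le_sum fun z _ => by
      nlinarith [(hf z).1, (hf z).2, hp0 z]
  -- Bernoulli: 1 - k*(1-f z) ≤ f z ^ k
  have hB : ∀ z, 1 - (k : ℝ) * (1 - f z) ≤ f z ^ k := by
    intro z
    have h := one_add_mul_le_pow (a := f z - 1) (by linarith [(hf z).1]) k
    have : (1 + (f z - 1)) ^ k = f z ^ k := by ring_nf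
    nlinarith [h]
  have hpf : 1 - (k : ℝ) * d ≤ ∑ z, p z * (f z) ^ k := by
    have hsum : ∑ z, p z * (1 - (k : ℝ) * (1 - f z)) ≤ ∑ z, p z * (f z) ^ k :=
      Finset.sum_le_sum fun z _ => mul_le_mul_of_nonneg_left (hB z) (hp0 z)
    have heq : ∑ z, p z * (1 - (k : ℝ) * (1 - f z))
        = (∑ z, p z) - (k : ℝ) * d := by
      rw [hd, Finset.mul_sum, ← Finset.sum_sub_distrib]
      exact Finset.sum_congr rfl fun z _ => by ring
    rw [heq, hp1] at hsum
    exact hsum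
  have hqp : ∑ z, p z * (f z) ^ k - ε ≤ ∑ z, q z * (f z) ^ k := by
    have hsplit : ∑ z, (q z - p z) * (f z) ^ k
        = ∑ z, q z * (f z) ^ k - ∑ z, p z * (f z) ^ k := by
      rw [← Finset.sum_sub_distrib]
      exact Finset.sum_congr rfl fun z _ => by ring
    have := abs_le.mp h2
    rw [hsplit] at this
    linarith [this.1]
  -- show k*d ≤ k*δ/a + k*√a
  have hkey : (k : ℝ) * d ≤ (k : ℝ) * δ / a + (k : ℝ) * Real.sqrt a := by
    have hk0 : (0:ℝ) ≤ (k : ℝ) := Nat.cast_nonneg k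
    rw [mul_div_assoc]
    rcases le_or_gt a 1 with h | h
    · have hδa : δ ≤ δ / a := by
        rw [le_div_iff₀ ha]; nlinarith
      have : d ≤ δ / a := le_trans (by rw [hd] at *; linarith) hδa
      have hs : 0 ≤ Real.sqrt a := Real.sqrt_nonneg a
      nlinarith [mul_le_mul_of_nonneg_left this hk0, mul_nonneg hk0 hs]
    · have hs : (1:ℝ) ≤ Real.sqrt a := by
        rw [show (1:ℝ) = Real.sqrt 1 by simp]
        exact Real.sqrt_le_sqrt h.le
      have hδa : 0 ≤ δ / a := div_nonneg hδ ha.le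
      nlinarith [mul_le_mul_of_nonneg_left (le_trans hd1 hs) hk0, mul_nonneg hk0 hδa]
  linarith
end
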